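/- Let $(A, \mathfrak{m})$ be a local ring and $d \colon F \to F'$ a homomorphism of free $A$-modules of finite rank. Then there exist direct sum decompositions $F = V \oplus W$ and $F' = W' \oplus U$ into free submodules such that $d(V) \subseteq \mathfrak{m} F'$ and $d$ restricts to an isomorphism $W \xrightarrow{\approx} W'$. -/

import Mathlib

open TensorProduct IsLocalRing

section Aux
variable {A : Type*} [CommRing A] [IsLocalRing A]
  {M : Type*} [AddCommGroup M] [Module A M]

lemma aux_tmul_eq_zero_iff (x : M) :
    (1 : ResidueField A) ⊗ₜ[A] x = 0 ↔ x ∈ (maximalIdeal A) • (⊤ : Submodule A M) := by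
  let e : ResidueField A ⊗[A] M ≃ₗ[A] M ⧸ ((maximalIdeal A) • (⊤ : Submodule A M)) :=
    quotTensorEquivQuotSMul M (maximalIdeal A)
  have h2 : e ((1 : ResidueField A) ⊗ₜ[A] x)
      = Submodule.Quotient.mk x := by
    exact quotTensorEquivQuotSMul_mk_one_tmul (maximalIdeal A) x
  constructor
  · intro h
    rw [h, map_zero] at h2
    rw [← Submodule.Quotient.mk_eq_zero]
    exact h2.symm
  · intro h
    apply e.injective
    rw [h2, map_zero, Submodule.Quotient.mk_eq_zero]
    exact h

lemma aux_basis_lift [Module.Free A M] [Module.Finite A M] {ι : Type*} [Fintype ι] (f : ι → M)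
    (b : Module.Basis ι (ResidueField A) (ResidueField A ⊗[A] M))
    (hb : ∀ i, (1 : ResidueField A) ⊗ₜ f i = b i) :
    ∃ bM : Module.Basis ι A M, ∀ i, bM i = f i := by
  classical
  have hsp : Submodule.span A (Set.range f) = ⊤ :=
    IsLocalRing.span_eq_top_of_tmul_eq_basis (R := A) f b hb
  have hsurj : Function.Surjective (Finsupp.linearCombination A f) := by
    rw [← LinearMap.range_eq_top, Finsupp.range_linearCombination]
    exact hsp
  let I := Module.Free.ChooseBasisIndex A M
  let bM0 := Module.Free.chooseBasis A M
  have hcard : Fintype.card ι = Fintype.card I := by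
    have h1 : Module.finrank A M = Fintype.card I :=
      Module.finrank_eq_card_chooseBasisIndex A M
    have h2 : Module.finrank (ResidueField A) (ResidueField A ⊗[A] M) = Module.finrank A M :=
      Module.finrank_baseChange
    have h3 : Module.finrank (ResidueField A) (ResidueField A ⊗[A] M) = Fintype.card ι :=
      Module.finrank_eq_card_basis b
    omega
  let e : ι ≃ I := Fintype.equivOfCardEq hcard
  let g : (ι →₀ A) →ₗ[A] (ι →₀ A) :=
    (Finsupp.domLCongr e.symm).toLinearMap ∘ₗ bM0.repr.toLinearMap ∘ₗ
      Finsupp.linearCombination A f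
  have hgsurj : Function.Surjective g :=
    (Finsupp.domLCongr e.symm : (I →₀ A) ≃ₗ[A] (ι →₀ A)).surjective.comp
      (bM0.repr.surjective.comp hsurj)
  have hginj : Function.Injective g :=
    OrzechProperty.injective_of_surjective_endomorphism g hgsurj
  have hinj : Function.Injective (Finsupp.linearCombination A f) := by
    have : Function.Injective (((Finsupp.domLCongr e.symm).toLinearMap ∘ₗ
        bM0.repr.toLinearMap : M →ₗ[A] (ι →₀ A)) ∘ (Finsupp.linearCombination A f)) := hginj
    exact Function.Injective.of_comp this
  let eqv := LinearEquiv.ofBijective (Finsupp.linearCombination A f) ⟨hinj, hsurj⟩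
  refine ⟨Module.Basis.ofRepr eqv.symm, fun i => ?_⟩
  show eqv.symm.symm (Finsupp.single i 1) = f i
  rw [LinearEquiv.symm_symm]
  show Finsupp.linearCombination A f (Finsupp.single i 1) = f i
  simp
end Aux

theorem stmt2 {A : Type*} [CommRing A] [IsLocalRing A]
    {F : Type*} [AddCommGroup F] [Module A F] [Module.Free A F] [Module.Finite A F]
    {F' : Type*} [AddCommGroup F'] [Module A F'] [Module.Free A F'] [Module.Finite A F']
    (d : F →ₗ[A] F') :
    ∃ (V W : Submodule A F) (W' U : Submodule A F'),
      IsCompl V W ∧ IsCompl W' U ∧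
      Module.Free A V ∧ Module.Free A W ∧ Module.Free A W' ∧ Module.Free A U ∧
      V.map d ≤ (maximalIdeal A) • (⊤ : Submodule A F') ∧
      W.map d = W' ∧ Disjoint W (LinearMap.ker d) := by
  classical
  set k := ResidueField A with hk
  let d' : k ⊗[A] F →ₗ[k] k ⊗[A] F' := d.baseChange k
  -- decompose k ⊗ F as ker d' ⊕ C
  let K : Submodule k (k ⊗[A] F) := LinearMap.ker d'
  obtain ⟨C, hC⟩ := K.exists_isCompl
  let bK := @Module.Free.chooseBasis k K _ _ _ (Module.Free.of_divisionRing k K)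
  let bC := @Module.Free.chooseBasis k C _ _ _ (Module.Free.of_divisionRing k C)
  let bF : Module.Basis (_ ⊕ _) k (k ⊗[A] F) :=
    (bK.prod bC).map (Submodule.prodEquivOfIsCompl _ _ hC)
  have hbFinl : ∀ i, bF (Sum.inl i) = (bK i : k ⊗[A] F) := by
    intro i
    simp [bF, Module.Basis.map_apply, Submodule.coe_prodEquivOfIsCompl']
  have hbFinr : ∀ j, bF (Sum.inr j) = (bC j : k ⊗[A] F) := by
    intro j
    simp [bF, Module.Basis.map_apply, Submodule.coe_prodEquivOfIsCompl']
  -- the images of the C-part are linearly independent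
  let c : _ → k ⊗[A] F' := fun j => d' (bF (Sum.inr j))
  have hli_c : LinearIndependent k c := by
    have h1 : LinearIndependent k (fun j => bF (Sum.inr j)) :=
      bF.linearIndependent.comp Sum.inr Sum.inr_injective
    refine h1.map (f := d') ?_
    refine Disjoint.mono_left ?_ hC.symm.disjoint
    rw [Submodule.span_le]
    rintro _ ⟨j, rfl⟩
    show bF (Sum.inr j) ∈ C
    rw [hbFinr j]
    exact (bC j).2
  -- decompose k ⊗ F' as span(c) ⊕ U₀
  let W₀ : Submodule k (k ⊗[A] F') := Submodule.span k (Set.range c)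
  obtain ⟨U₀, hU₀⟩ := W₀.exists_isCompl
  let bW₀ : Module.Basis _ k W₀ := Module.Basis.span hli_c
  let bU := @Module.Free.chooseBasis k U₀ _ _ _ (Module.Free.of_divisionRing k U₀)
  let bF' : Module.Basis (_ ⊕ _) k (k ⊗[A] F') :=
    (bW₀.prod bU).map (Submodule.prodEquivOfIsCompl _ _ hU₀)
  have hbF'inl : ∀ j, bF' (Sum.inl j) = c j := by
    intro j
    simp only [bF', Module.Basis.map_apply, Module.Basis.prod_apply, Sum.elim_inl, Function.comp_apply,
      Submodule.coe_prodEquivOfIsCompl', LinearMap.coe_inl]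
    rw [ZeroMemClass.coe_zero, add_zero]
    exact congrArg Subtype.val (Module.Basis.span_apply hli_c j)
  have hbF'inr : ∀ s, bF' (Sum.inr s) = (bU s : k ⊗[A] F') := by
    intro s
    simp [bF', Module.Basis.map_apply, Submodule.coe_prodEquivOfIsCompl']
  -- lifts
  have hmkF := TensorProduct.mk_surjective A F k Ideal.Quotient.mk_surjective
  have hmkF' := TensorProduct.mk_surjective A F' k Ideal.Quotient.mk_surjective
  choose liftF hliftF using hmkF
  choose liftF' hliftF' using hmkF'
  let v := fun i => liftF (bF (Sum.inl i))
  let w := fun j => liftF (bF (Sum.inr j))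
  let u := fun s => liftF' (bF' (Sum.inr s))
  have hvw : ∀ i, (1 : k) ⊗ₜ (Sum.elim v w i) = bF i := by
    rintro (i | j)
    · exact hliftF _
    · exact hliftF _
  obtain ⟨bFA, hbFA⟩ := aux_basis_lift (Sum.elim v w) bF hvw
  have hdw : ∀ j, (1 : k) ⊗ₜ[A] (d (w j)) = c j := by
    intro j
    have h0 : d' ((1 : k) ⊗ₜ[A] (w j)) = (1 : k) ⊗ₜ[A] (d (w j)) := by
      simp [d', LinearMap.baseChange_tmul]
    have hw1 : (1 : k) ⊗ₜ[A] (w j) = bF (Sum.inr j) := hliftF _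
    rw [← h0, hw1]
  have hdwu : ∀ i, (1 : k) ⊗ₜ (Sum.elim (d ∘ w) u i) = bF' i := by
    rintro (j | s)
    · rw [hbF'inl]; exact hdw j
    · exact hliftF' _
  obtain ⟨bF'A, hbF'A⟩ := aux_basis_lift (Sum.elim (d ∘ w) u) bF' hdwu
  -- the submodules
  refine ⟨Submodule.span A (Set.range v), Submodule.span A (Set.range w),
    Submodule.span A (Set.range (d ∘ w)), Submodule.span A (Set.range u), ?_, ?_, ?_, ?_, ?_, ?_, ?_, ?_, ?_⟩
  case _ => -- IsCompl V W
    have hli : LinearIndependent A (Sum.elim v w) := by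
      have : ⇑bFA = Sum.elim v w := funext hbFA
      simpa [this] using bFA.linearIndependent
    obtain ⟨h1, h2, h3⟩ := linearIndependent_sum.mp hli
    constructor
    · simpa using h3
    · rw [codisjoint_iff, ← Submodule.span_union, ← Set.Sum.elim_range]
      have : ⇑bFA = Sum.elim v w := funext hbFA
      rw [← this]
      exact bFA.span_eq
  case _ => -- IsCompl W' U
    have hli : LinearIndependent A (Sum.elim (d ∘ w) u) := by
      have : ⇑bF'A = Sum.elim (d ∘ w) u := funext hbF'A
      simpa [this] using bF'A.linearIndependent
    obtain ⟨h1, h2, h3⟩ := linearIndependent_sum.mp hli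
    constructor
    · simpa using h3
    · rw [codisjoint_iff, ← Submodule.span_union, ← Set.Sum.elim_range]
      have : ⇑bF'A = Sum.elim (d ∘ w) u := funext hbF'A
      rw [← this]
      exact bF'A.span_eq
  case _ =>
    have : ⇑bFA = Sum.elim v w := funext hbFA
    have hli : LinearIndependent A (Sum.elim v w) := by simpa [this] using bFA.linearIndependent
    exact Module.Free.of_basis (Module.Basis.span (hli.comp Sum.inl Sum.inl_injective))
  case _ =>
    have : ⇑bFA = Sum.elim v w := funext hbFA
    have hli : LinearIndependent A (Sum.elim v w) := by simpa [this] using bFA.linearIndependent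
    exact Module.Free.of_basis (Module.Basis.span (hli.comp Sum.inr Sum.inr_injective))
  case _ =>
    have : ⇑bF'A = Sum.elim (d ∘ w) u := funext hbF'A
    have hli : LinearIndependent A (Sum.elim (d ∘ w) u) := by
      simpa [this] using bF'A.linearIndependent
    exact Module.Free.of_basis (Module.Basis.span (hli.comp Sum.inl Sum.inl_injective))
  case _ =>
    have : ⇑bF'A = Sum.elim (d ∘ w) u := funext hbF'A
    have hli : LinearIndependent A (Sum.elim (d ∘ w) u) := by
      simpa [this] using bF'A.linearIndependent
    exact Module.Free.of_basis (Module.Basis.span (hli.comp Sum.inr Sum.inr_injective))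
  case _ => -- V.map d ≤ m • ⊤
    rw [Submodule.map_span, Submodule.span_le]
    rintro _ ⟨_, ⟨i, rfl⟩, rfl⟩
    show d (v i) ∈ maximalIdeal A • (⊤ : Submodule A F')
    rw [← aux_tmul_eq_zero_iff]
    have h1 : d' ((1 : k) ⊗ₜ[A] (v i)) = (1 : k) ⊗ₜ[A] (d (v i)) := by
      simp [d', LinearMap.baseChange_tmul]
    have hv1 : (1 : k) ⊗ₜ[A] (v i) = bF (Sum.inl i) := hliftF _
    rw [← h1, hv1, hbFinl]
    exact LinearMap.mem_ker.mp (bK i).2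
  case _ => -- W.map d = W'
    rw [Submodule.map_span, ← Set.range_comp]
  case _ => -- Disjoint W (ker d)
    have : ⇑bF'A = Sum.elim (d ∘ w) u := funext hbF'A
    have hli : LinearIndependent A (Sum.elim (d ∘ w) u) := by
      simpa [this] using bF'A.linearIndependent
    have hlidw : LinearIndependent A (d ∘ w) := hli.comp Sum.inl Sum.inl_injective
    rw [Submodule.disjoint_def]
    intro x hxW hxker
    rw [LinearMap.mem_ker] at hxker
    obtain ⟨cf, hcf⟩ := (Finsupp.mem_span_range_iff_exists_finsupp).mp hxW
    have hd : Finsupp.linearCombination A (d ∘ w) cf = 0 := by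
      rw [Finsupp.linearCombination_apply]
      rw [← hcf] at hxker
      rw [← hxker, map_finsuppSum]
      simp [Finsupp.sum, Function.comp]
    have := linearIndependent_iff.mp hlidw cf hd
    rw [← hcf, this]
    simp
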